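/- Let (e_i)_{i≥0} be i.i.d. real-valued random variables whose common law is absolutely continuous with density f, let X₀ be a real-valued random variable such that for every n ≥ 1 the variable e_n is independent of (X₀, e₀, …, e_{n−1}), fix real numbers r > 0 and s, and define X_i = r·X_{i−1} + e_i + s·e_{i−1} for i ≥ 1; set M_n = max_{1≤i≤n} X_i and fix x ∈ ℝ. Then for every n ≥ 1 and all y₀, y₁ ∈ ℝ: P(M_n ≤ x, X_n ≤ y₀, e_n ≤ y₁) = ∫_{−∞}^{y₁} f(t) · P(M_{n−1} ≤ x, X_{n−1} ≤ (min(y₀, x) − s·e_{n−1} − t)/r) dt, where for n = 1 the condition 'M₀ ≤ x' is interpreted as vacuously true. -/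

import Mathlib

open MeasureTheory
open scoped ProbabilityTheory

/-- Auxiliary: the ARMA recursion as a measurable function of `(X₀, e₀, …, e_{n−1})`. -/
noncomputable def armaPhi (r s : ℝ) (n : ℕ) : ℕ → ℝ × (Fin n → ℝ) → ℝ
  | 0 => fun v => v.1
  | (k+1) => fun v =>
      if h : k + 1 < n then
        r * armaPhi r s n k v + v.2 ⟨k+1, h⟩ + s * v.2 ⟨k, Nat.lt_of_succ_lt h⟩
      else 0

lemma armaPhi_measurable (r s : ℝ) (n k : ℕ) : Measurable (armaPhi r s n k) := by
  induction k with
  | zero => exact measurable_fst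
  | succ k ih =>
    by_cases h : k + 1 < n
    · simp only [armaPhi, dif_pos h]
      exact ((measurable_const.mul ih).add
        ((measurable_pi_apply _).comp measurable_snd)).add
        (measurable_const.mul ((measurable_pi_apply _).comp measurable_snd))
    · simp only [armaPhi, dif_neg h]; exact measurable_const

/-- absolutely continuous form of the recurrence of Theorem 2.1:
for the ARMA(1,1) process `X_i = r·X_{i−1} + e_i + s·e_{i−1}` with i.i.d.
errors having density `f`, `r > 0`, and `M_n = max_{1≤i≤n} X_i` (`M₀ = −∞`),
`P(M_n ≤ x, X_n ≤ y₀, e_n ≤ y₁)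
  = ∫_{−∞}^{y₁} f(t)·P(M_{n−1} ≤ x, X_{n−1} ≤ (min(y₀,x) − s·e_{n−1} − t)/r) dt`. -/
theorem arma11_recurrence_density
    {Ω : Type*} [MeasureSpace Ω] [IsProbabilityMeasure (ℙ : Measure Ω)]
    (e X : ℕ → Ω → ℝ) (f : ℝ → ℝ)
    (hf_meas : Measurable f) (hf_nonneg : ∀ t, 0 ≤ f t)
    (he_meas : ∀ i, Measurable (e i)) (hX0_meas : Measurable (X 0))
    (hiid : ProbabilityTheory.iIndepFun e ℙ)
    (hlaw : ∀ i, Measure.map (e i) ℙ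
        = volume.withDensity (fun t => ENNReal.ofReal (f t)))
    (hindep : ∀ n, 1 ≤ n → ProbabilityTheory.IndepFun
        (fun ω => (X 0 ω, fun i : Fin n => e i ω)) (e n) ℙ)
    (r s x : ℝ) (hr : 0 < r)
    (hX : ∀ i, 1 ≤ i → ∀ ω, X i ω = r * X (i - 1) ω + e i ω + s * e (i - 1) ω)
    (n : ℕ) (hn : 1 ≤ n) (y₀ y₁ : ℝ) :
    (ℙ {ω | (∀ i, 1 ≤ i → i ≤ n → X i ω ≤ x) ∧ X n ω ≤ y₀ ∧ e n ω ≤ y₁}).toReal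
      = ∫ t in Set.Iic y₁, f t *
          (ℙ {ω | (∀ i, 1 ≤ i → i ≤ n - 1 → X i ω ≤ x) ∧
              X (n - 1) ω ≤ (min y₀ x - s * e (n - 1) ω - t) / r}).toReal := by
  classical
  have hn1 : n - 1 < n := by omega
  set V : Ω → ℝ × (Fin n → ℝ) := fun ω => (X 0 ω, fun i : Fin n => e i ω) with hVdef
  have hVm : Measurable V :=
    hX0_meas.prodMk (measurable_pi_lambda _ fun i => he_meas i)
  -- the ARMA values are functions of V
  have hcorr : ∀ k, k < n → ∀ ω, X k ω = armaPhi r s n k (V ω) := by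
    intro k
    induction k with
    | zero => intro _ ω; rfl
    | succ k ih =>
      intro h ω
      have hk : k < n := Nat.lt_of_succ_lt h
      have := hX (k+1) (by omega) ω
      simp only [Nat.add_sub_cancel] at this
      simp only [armaPhi, dif_pos h]
      rw [this, ih hk ω]
  -- the "past" predicate
  set C : ℝ → ℝ × (Fin n → ℝ) → Prop := fun t v =>
    (∀ i, 1 ≤ i → i ≤ n - 1 → armaPhi r s n i v ≤ x) ∧
      armaPhi r s n (n-1) v ≤ (min y₀ x - s * v.2 ⟨n-1, hn1⟩ - t) / r with hCdef
  have hS' : MeasurableSet {p : ℝ × (ℝ × (Fin n → ℝ)) | C p.1 p.2} := by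
    have h2 : MeasurableSet {p : ℝ × (ℝ × (Fin n → ℝ)) |
        ∀ i, 1 ≤ i → i ≤ n - 1 → armaPhi r s n i p.2 ≤ x} := by
      rw [Set.setOf_forall]
      refine MeasurableSet.iInter fun i => ?_
      rw [Set.setOf_forall]
      refine MeasurableSet.iInter fun _ => ?_
      rw [Set.setOf_forall]
      refine MeasurableSet.iInter fun _ => ?_
      exact measurableSet_le ((armaPhi_measurable r s n i).comp measurable_snd)
        measurable_const
    have h3 : MeasurableSet {p : ℝ × (ℝ × (Fin n → ℝ)) |
        armaPhi r s n (n-1) p.2 ≤ (min y₀ x - s * p.2.2 ⟨n-1, hn1⟩ - p.1) / r} := by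
      refine measurableSet_le ((armaPhi_measurable r s n (n-1)).comp measurable_snd) ?_
      have hev : Measurable fun p : ℝ × (ℝ × (Fin n → ℝ)) => p.2.2 ⟨n-1, hn1⟩ :=
        (measurable_pi_apply _).comp (measurable_snd.comp measurable_snd)
      exact ((measurable_const.sub (measurable_const.mul hev)).sub
        measurable_fst).div_const r
    exact h2.inter h3
  set Sset : Set (ℝ × (ℝ × (Fin n → ℝ))) :=
    {p | p.1 ≤ y₁} ∩ {p | C p.1 p.2} with hSdef
  have hS : MeasurableSet Sset :=
    (measurableSet_le measurable_fst measurable_const).inter hS'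
  -- event identification (LHS)
  have hE : {ω | (∀ i, 1 ≤ i → i ≤ n → X i ω ≤ x) ∧ X n ω ≤ y₀ ∧ e n ω ≤ y₁}
      = (fun ω => (e n ω, V ω)) ⁻¹' Sset := by
    ext ω
    simp only [hSdef, hCdef, Set.mem_setOf_eq, Set.mem_preimage, Set.mem_inter_iff]
    have hco : ∀ (h : n - 1 < n), (V ω).2 ⟨n-1, h⟩ = e (n-1) ω := fun _ => rfl
    have hxn := hX n hn ω
    constructor
    · rintro ⟨h1, h2, h3⟩
      refine ⟨h3, fun i hi1 hi2 => by
        rw [← hcorr i (by omega) ω]; exact h1 i hi1 (by omega), ?_⟩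
      rw [← hcorr (n-1) hn1 ω, le_div_iff₀ hr]
      have hmin : X n ω ≤ min y₀ x := le_min h2 (h1 n hn le_rfl)
      have hmm := mul_comm (X (n-1) ω) r
      linarith
    · rintro ⟨h3, hpast, hlast⟩
      rw [← hcorr (n-1) hn1 ω, le_div_iff₀ hr] at hlast
      have hmm := mul_comm (X (n-1) ω) r
      have hmin : X n ω ≤ min y₀ x := by linarith
      refine ⟨fun i hi1 hi2 => ?_, hmin.trans (min_le_left _ _), h3⟩
      by_cases hi : i = n
      · subst hi; exact hmin.trans (min_le_right _ _)
      · rw [hcorr i (by omega) ω]; exact hpast i hi1 (by omega)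
  -- event identification (RHS)
  have hE2 : ∀ t : ℝ, {ω | (∀ i, 1 ≤ i → i ≤ n - 1 → X i ω ≤ x) ∧
      X (n - 1) ω ≤ (min y₀ x - s * e (n - 1) ω - t) / r} = V ⁻¹' {v | C t v} := by
    intro t
    ext ω
    simp only [hCdef, Set.mem_setOf_eq, Set.mem_preimage]
    constructor
    · rintro ⟨h1, h2⟩
      exact ⟨fun i hi1 hi2 => by rw [← hcorr i (by omega) ω]; exact h1 i hi1 hi2,
        by rw [← hcorr (n-1) hn1 ω]; exact h2⟩
    · rintro ⟨h1, h2⟩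
      exact ⟨fun i hi1 hi2 => by rw [hcorr i (by omega) ω]; exact h1 i hi1 hi2,
        by rw [hcorr (n-1) hn1 ω]; exact h2⟩
  -- independence
  have hInd : ProbabilityTheory.IndepFun (e n) V ℙ := (hindep n hn).symm
  have hmap : Measure.map (fun ω => (e n ω, V ω)) ℙ
      = (Measure.map (e n) ℙ).prod (Measure.map V ℙ) :=
    (ProbabilityTheory.indepFun_iff_map_prod_eq_prod_map_map
      (he_meas n).aemeasurable hVm.aemeasurable).mp hInd
  have hPV : IsProbabilityMeasure (Measure.map V ℙ) :=
    Measure.isProbabilityMeasure_map hVm.aemeasurable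
  set g : ℝ → ENNReal := fun t => (Measure.map V ℙ) {v | C t v} with hgdef
  have hg_meas : Measurable g := measurable_measure_prodMk_left hS'
  have hg_le : ∀ t, g t ≤ 1 := fun t => prob_le_one
  -- main computation at the level of lintegrals
  have key : ℙ {ω | (∀ i, 1 ≤ i → i ≤ n → X i ω ≤ x) ∧ X n ω ≤ y₀ ∧ e n ω ≤ y₁}
      = ∫⁻ t in Set.Iic y₁, ENNReal.ofReal (f t) * g t := by
    rw [hE, ← Measure.map_apply ((he_meas n).prodMk hVm) hS, hmap,
      Measure.prod_apply hS]
    have hsec : ∀ t : ℝ, (Measure.map V ℙ) (Prod.mk t ⁻¹' Sset)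
        = Set.indicator (Set.Iic y₁) g t := by
      intro t
      by_cases ht : t ≤ y₁
      · rw [Set.indicator_of_mem (Set.mem_Iic.mpr ht)]
        congr 1
        ext v
        simp [hSdef, ht]
      · rw [Set.indicator_of_notMem (by simpa using ht)]
        convert measure_empty (μ := Measure.map V ℙ)
        ext v
        simp [hSdef, ht]
    rw [lintegral_congr hsec, lintegral_indicator measurableSet_Iic, hlaw n,
      restrict_withDensity measurableSet_Iic,
      lintegral_withDensity_eq_lintegral_mul _ (hf_meas.ennreal_ofReal) hg_meas]
    rfl
  rw [key]
  -- convert to a Bochner integral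
  have hfin : ∀ t : ℝ, ENNReal.ofReal (f t) * g t < ⊤ :=
    fun t => ENNReal.mul_lt_top ENNReal.ofReal_lt_top
      (lt_of_le_of_lt (hg_le t) (by norm_num))
  rw [← integral_toReal (f := fun t => ENNReal.ofReal (f t) * g t) ((hf_meas.ennreal_ofReal.mul hg_meas).aemeasurable)
    (Filter.Eventually.of_forall fun t => hfin t)]
  refine setIntegral_congr_fun measurableSet_Iic fun t _ => ?_
  rw [ENNReal.toReal_mul, ENNReal.toReal_ofReal (hf_nonneg t)]
  congr 2
  rw [hE2 t]
  have hCt : MeasurableSet {v : ℝ × (Fin n → ℝ) | C t v} :=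
    hS'.preimage (measurable_prodMk_left (x := t))
  exact Measure.map_apply hVm hCt
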